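/- Define the sequence r_n by ∑_{n≥1} r_n z^{rn}/(rn)! = -log(∑_{n≥0} (-1)^n z^{rn}/(rn)!). Then r_n equals the generalized Euler number E_{rn-1}, the number of permutations of [rn-1] with descent set {r, 2r, ..., rn-r}. -/

import Mathlib

open PowerSeries

/-- The descent set of a permutation of `[m]`. -/
def desSet {m : ℕ} (σ : Equiv.Perm (Fin m)) : Set ℕ :=
  {i | ∃ h : i < m, 0 < i ∧
    σ ⟨i, h⟩ < σ ⟨i - 1, lt_of_le_of_lt (Nat.sub_le i 1) h⟩}

/-- The generalized Euler number: the number of permutations of `[m]` whose descent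
set is exactly the set of positive multiples of `r` below `m`. -/
noncomputable def genEuler (r m : ℕ) : ℕ :=
  Nat.card {σ : Equiv.Perm (Fin m) // desSet σ = {i | 0 < i ∧ i < m ∧ r ∣ i}}

namespace Stmt5

lemma mem_desSet {m : ℕ} {σ : Equiv.Perm (Fin m)} {i : ℕ} (h : i < m) :
    i ∈ desSet σ ↔ 0 < i ∧ σ ⟨i, h⟩ < σ ⟨i - 1, lt_of_le_of_lt (Nat.sub_le i 1) h⟩ := by
  constructor
  · rintro ⟨h', hi, hlt⟩; exact ⟨hi, hlt⟩
  · rintro ⟨hi, hlt⟩; exact ⟨h, hi, hlt⟩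

lemma desSet_bounds {m : ℕ} {σ : Equiv.Perm (Fin m)} {i : ℕ} (h : i ∈ desSet σ) :
    0 < i ∧ i < m := by obtain ⟨h', hi, _⟩ := h; exact ⟨hi, h'⟩

variable {N a : ℕ}

noncomputable def phi (ha : a ≤ N) (S : Finset (Fin N)) (hS : S.card = a)
    (τ : Equiv.Perm (Fin (N - a))) : Equiv.Perm (Fin N) :=
  ((finCongr (by omega : N = a + (N - a))).trans <| finSumFinEquiv.symm.trans <|
    (Equiv.sumCongr (S.orderIsoOfFin hS).toEquiv
      (τ.trans (Sᶜ.orderIsoOfFin (by simp [Finset.card_compl, hS])).toEquiv)).trans <|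
    (Equiv.sumCongr (Equiv.refl _)
      (Equiv.subtypeEquivRight (fun x => Finset.mem_compl))).trans
    (Equiv.sumCompl (· ∈ S)))

lemma phi_apply_lt (ha : a ≤ N) (S : Finset (Fin N)) (hS : S.card = a)
    (τ : Equiv.Perm (Fin (N - a))) (i : Fin N) (hi : (i : ℕ) < a) :
    phi ha S hS τ i = S.orderEmbOfFin hS ⟨i, hi⟩ := by
  have h2 : finSumFinEquiv.symm ((finCongr (by omega : N = a + (N - a))) i)
      = Sum.inl ⟨(i : ℕ), hi⟩ := by
    have h1 : (finCongr (by omega : N = a + (N - a))) i = Fin.castAdd (N - a) ⟨(i : ℕ), hi⟩ := by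
      ext; simp
    rw [h1, finSumFinEquiv_symm_apply_castAdd]
  simp only [phi, Equiv.trans_apply]; rw [h2]; simp

lemma phi_apply_ge (ha : a ≤ N) (S : Finset (Fin N)) (hS : S.card = a)
    (τ : Equiv.Perm (Fin (N - a))) (i : Fin N) (hi : a ≤ (i : ℕ)) :
    phi ha S hS τ i = Sᶜ.orderEmbOfFin (by simp [Finset.card_compl, hS])
      (τ ⟨(i : ℕ) - a, by omega⟩) := by
  have h2 : finSumFinEquiv.symm ((finCongr (by omega : N = a + (N - a))) i)
      = Sum.inr ⟨(i : ℕ) - a, by omega⟩ := by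
    have h1 : (finCongr (by omega : N = a + (N - a))) i
        = Fin.natAdd a ⟨(i : ℕ) - a, by omega⟩ := by
      ext; simp; omega
    rw [h1, finSumFinEquiv_symm_apply_natAdd]
  simp only [phi, Equiv.trans_apply]; rw [h2]; simp

end Stmt5
namespace Stmt5
variable {N a : ℕ}

lemma phi_des_ge (ha : a ≤ N) (S : Finset (Fin N)) (hS : S.card = a)
    (τ : Equiv.Perm (Fin (N - a))) : ∀ i ∈ desSet (phi ha S hS τ), a ≤ i := by
  intro i hi
  by_contra hcon
  push_neg at hcon
  obtain ⟨hiN, hi0, hlt⟩ := hi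
  rw [phi_apply_lt ha S hS τ ⟨i, hiN⟩ hcon,
    phi_apply_lt ha S hS τ ⟨i - 1, _⟩ (by simp; omega)] at hlt
  rw [OrderEmbedding.lt_iff_lt] at hlt
  have : (i : ℕ) < i - 1 := hlt
  omega

lemma phi_des_gt (ha : a ≤ N) (S : Finset (Fin N)) (hS : S.card = a)
    (τ : Equiv.Perm (Fin (N - a))) {i : ℕ} (h1 : a < i) (h2 : i < N) :
    i ∈ desSet (phi ha S hS τ) ↔ (i - a) ∈ desSet τ := by
  have hia : i - a < N - a := by omega
  rw [mem_desSet h2, mem_desSet hia]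
  rw [phi_apply_ge ha S hS τ ⟨i, h2⟩ (le_of_lt h1),
    phi_apply_ge ha S hS τ ⟨i - 1, _⟩ (by simp; omega)]
  rw [OrderEmbedding.lt_iff_lt]
  have harg : ((⟨i, h2⟩ : Fin N) : ℕ) - 1 - a = i - a - 1 := by simp; omega
  constructor
  · rintro ⟨_, hl⟩
    refine ⟨by omega, ?_⟩
    convert hl using 3
    · rfl
    all_goals simp <;> omega
  · rintro ⟨_, hl⟩
    refine ⟨by omega, ?_⟩
    convert hl using 3
    · rfl
    all_goals simp <;> omega

noncomputable def Sof (ha : a ≤ N) (σ : Equiv.Perm (Fin N)) : Finset (Fin N) :=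
  ((Finset.univ : Finset (Fin a)).map (Fin.castLEEmb ha)).image σ

lemma card_Sof (ha : a ≤ N) (σ : Equiv.Perm (Fin N)) : (Sof ha σ).card = a := by
  rw [Sof, Finset.card_image_of_injective _ σ.injective, Finset.card_map,
    Finset.card_univ, Fintype.card_fin]

lemma mem_Sof (ha : a ≤ N) (σ : Equiv.Perm (Fin N)) (j : Fin N) :
    σ j ∈ Sof ha σ ↔ (j : ℕ) < a := by
  simp only [Sof, Finset.mem_image, Finset.mem_map, Finset.mem_univ, true_and]
  constructor
  · rintro ⟨y, ⟨z, hz⟩, hy⟩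
    have : y = j := σ.injective hy
    subst this
    subst hz
    simp [Fin.castLEEmb]
  · intro hj
    exact ⟨j, ⟨⟨(j : ℕ), hj⟩, by simp [Fin.castLEEmb]⟩, rfl⟩

lemma card_Sof_compl (ha : a ≤ N) (σ : Equiv.Perm (Fin N)) :
    (Sof ha σ)ᶜ.card = N - a := by
  simp [Finset.card_compl, card_Sof ha σ]

noncomputable def tauof (ha : a ≤ N) (σ : Equiv.Perm (Fin N)) : Equiv.Perm (Fin (N - a)) :=
  Equiv.ofBijective (fun j => ((Sof ha σ)ᶜ.orderIsoOfFin (card_Sof_compl ha σ)).symm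
      ⟨σ ⟨a + (j : ℕ), by have := j.isLt; omega⟩, by
        rw [Finset.mem_compl, mem_Sof]; simp⟩)
    (Finite.injective_iff_bijective.mp (by
      intro j k hjk
      have h2 := congrArg (((Sof ha σ)ᶜ.orderIsoOfFin (card_Sof_compl ha σ)) ·) hjk
      simp only [OrderIso.apply_symm_apply] at h2
      have h3 : σ ⟨a + (j : ℕ), by have := j.isLt; omega⟩
          = σ ⟨a + (k : ℕ), by have := k.isLt; omega⟩ := congrArg Subtype.val h2
      have h4 := σ.injective h3
      have h5 : a + (j : ℕ) = a + (k : ℕ) := congrArg Fin.val h4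
      exact Fin.ext (by omega)))

lemma emb_iso_symm {k : ℕ} {s : Finset (Fin N)} (h : s.card = k) (y : {x // x ∈ s}) :
    s.orderEmbOfFin h ((s.orderIsoOfFin h).symm y) = ↑y := by
  rw [← Finset.coe_orderIsoOfFin_apply, OrderIso.apply_symm_apply]

lemma phi_Sof_tauof (ha : a ≤ N) (σ : Equiv.Perm (Fin N)) (hσ : ∀ i ∈ desSet σ, a ≤ i) :
    phi ha (Sof ha σ) (card_Sof ha σ) (tauof ha σ) = σ := by
  apply Equiv.ext; intro i
  rcases lt_or_ge (i : ℕ) a with hi | hi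
  · rw [phi_apply_lt _ _ _ _ i hi]
    have hf : StrictMono (fun x : Fin a => σ (Fin.castLE ha x)) := by
      cases a with
      | zero => exact fun x => x.elim0
      | succ b =>
        rw [Fin.strictMono_iff_lt_succ]
        intro k
        have hkN : (k : ℕ) + 1 < N := by have := k.isLt; omega
        have hnd : ¬ ((k : ℕ) + 1 ∈ desSet σ) := fun hd => by
          have := hσ _ hd; have := k.isLt; omega
        rw [mem_desSet hkN] at hnd
        push_neg at hnd
        have hle := hnd (Nat.succ_pos _)
        simp only [Nat.add_sub_cancel] at hle
        have hne : σ ⟨(k : ℕ), by omega⟩ ≠ σ ⟨(k : ℕ) + 1, hkN⟩ := fun hc => by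
          have := congrArg Fin.val (σ.injective hc); simp at this
        have hlt := lt_of_le_of_ne hle hne
        convert hlt using 2
        all_goals exact Fin.ext (by simp)
    have hmem : ∀ x : Fin a, σ (Fin.castLE ha x) ∈ Sof ha σ := fun x =>
      (mem_Sof ha σ _).mpr (by simp [x.isLt])
    have := Finset.orderEmbOfFin_unique (card_Sof ha σ) hmem hf
    rw [← congrFun this ⟨(i : ℕ), hi⟩]
    exact congrArg σ (Fin.ext rfl)
  · rw [phi_apply_ge _ _ _ _ i hi]
    show (Sof ha σ)ᶜ.orderEmbOfFin _ (tauof ha σ ⟨(i : ℕ) - a, by have := i.isLt; omega⟩) = σ i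
    rw [show tauof ha σ ⟨(i : ℕ) - a, by have := i.isLt; omega⟩
        = ((Sof ha σ)ᶜ.orderIsoOfFin (card_Sof_compl ha σ)).symm
          ⟨σ ⟨a + ((i : ℕ) - a), by have := i.isLt; omega⟩, by
            rw [Finset.mem_compl, mem_Sof]; simp⟩ from rfl]
    rw [emb_iso_symm]
    exact congrArg σ (Fin.ext (by simp; omega))

end Stmt5
namespace Stmt5
variable {N a : ℕ}

lemma Sof_phi (ha : a ≤ N) (S : Finset (Fin N)) (hS : S.card = a)
    (τ : Equiv.Perm (Fin (N - a))) : Sof ha (phi ha S hS τ) = S := by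
  apply Finset.eq_of_subset_of_card_le
  · intro x hx
    set σ := phi ha S hS τ with hσ
    have hx' : σ (σ.symm x) ∈ Sof ha σ := by rw [Equiv.apply_symm_apply]; exact hx
    rw [mem_Sof] at hx'
    have := phi_apply_lt ha S hS τ (σ.symm x) hx'
    rw [← hσ, Equiv.apply_symm_apply] at this
    rw [this]
    exact Finset.orderEmbOfFin_mem S hS _
  · rw [card_Sof, ← hS]

lemma phi_inj (ha : a ≤ N)
    {S S' : Finset (Fin N)} {hS : S.card = a} {hS' : S'.card = a}
    {τ τ' : Equiv.Perm (Fin (N - a))}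
    (h : phi ha S hS τ = phi ha S' hS' τ') : S = S' ∧ τ = τ' := by
  have hSS : S = S' := by rw [← Sof_phi ha S hS τ, h, Sof_phi]
  subst hSS
  refine ⟨rfl, ?_⟩
  apply Equiv.ext; intro j
  have hj : a + (j : ℕ) < N := by have := j.isLt; omega
  have h1 := congrArg (fun σ : Equiv.Perm (Fin N) => σ ⟨a + (j : ℕ), hj⟩) h
  rw [phi_apply_ge ha S hS τ ⟨a + (j : ℕ), hj⟩ (by simp),
    phi_apply_ge ha S hS' τ' ⟨a + (j : ℕ), hj⟩ (by simp)] at h1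
  have h2 := (Sᶜ.orderEmbOfFin _).injective h1
  have h3 : j = (⟨(⟨a + (j : ℕ), hj⟩ : Fin N).val - a, by
      have := j.isLt; simp only [Fin.val_mk]; omega⟩ : Fin (N - a)) := Fin.ext (by simp)
  rw [h3]; exact h2

noncomputable def phiEquiv (ha : a ≤ N) :
    ({S : Finset (Fin N) // S.card = a} × Equiv.Perm (Fin (N - a))) ≃
      {σ : Equiv.Perm (Fin N) // ∀ i ∈ desSet σ, a ≤ i} :=
  Equiv.ofBijective (fun p => ⟨phi ha p.1.1 p.1.2 p.2, phi_des_ge ha p.1.1 p.1.2 p.2⟩)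
    ⟨by
      rintro ⟨⟨S, hS⟩, τ⟩ ⟨⟨S', hS'⟩, τ'⟩ hp
      have h := congrArg Subtype.val hp
      simp only at h
      obtain ⟨h1, h2⟩ := phi_inj ha h
      subst h1; subst h2; rfl,
     by
      rintro ⟨σ, hσ⟩
      exact ⟨(⟨Sof ha σ, card_Sof ha σ⟩, tauof ha σ),
        Subtype.ext (phi_Sof_tauof ha σ hσ)⟩⟩

lemma phiEquiv_apply (ha : a ≤ N) (p) :
    ((phiEquiv ha p : {σ : Equiv.Perm (Fin N) // ∀ i ∈ desSet σ, a ≤ i}) : Equiv.Perm (Fin N))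
      = phi ha p.1.1 p.1.2 p.2 := rfl

/-- descent-set characterization transferred across `phi`. -/
lemma desB (ha : a ≤ N) (S : Finset (Fin N)) (hS : S.card = a)
    (τ : Equiv.Perm (Fin (N - a))) (T : Set ℕ) (hT : ∀ i ∈ T, a < i ∧ i < N) :
    desSet (phi ha S hS τ) \ {a} = T ↔ desSet τ = {j | j + a ∈ T} := by
  constructor
  · intro hd
    ext j
    have hj := fun h => desSet_bounds (σ := τ) (i := j) h
    constructor
    · intro hjd
      obtain ⟨hj0, hjN⟩ := hj hjd
      have h1 : (j + a) ∈ desSet (phi ha S hS τ) := by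
        rw [phi_des_gt ha S hS τ (by omega) (by omega)]
        simpa [Nat.add_sub_cancel] using hjd
      have h2 : j + a ∈ desSet (phi ha S hS τ) \ {a} := ⟨h1, by simp; omega⟩
      rw [hd] at h2
      exact h2
    · intro hjT
      have hjT' : (j + a : ℕ) ∈ T := hjT
      obtain ⟨hja, hjN⟩ := hT _ hjT'
      have h1 : j + a ∈ desSet (phi ha S hS τ) \ {a} := by rw [hd]; exact hjT'
      have h2 := h1.1
      rw [phi_des_gt ha S hS τ (by omega) (by omega)] at h2
      simpa [Nat.add_sub_cancel] using h2
  · intro hd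
    ext i
    constructor
    · rintro ⟨hi, hine⟩
      obtain ⟨hi0, hiN⟩ := desSet_bounds hi
      have hai : a ≤ i := phi_des_ge ha S hS τ i hi
      have hai' : a < i := lt_of_le_of_ne hai (by simpa [eq_comm] using hine)
      rw [phi_des_gt ha S hS τ hai' hiN, hd] at hi
      have : (i - a) + a ∈ T := hi
      rwa [Nat.sub_add_cancel hai] at this
    · intro hiT
      obtain ⟨hai, hiN⟩ := hT _ hiT
      refine ⟨?_, by simp; omega⟩
      rw [phi_des_gt ha S hS τ hai hiN, hd]
      show (i - a) + a ∈ T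
      rwa [Nat.sub_add_cancel (le_of_lt hai)]

def prodSubtypeSnd {X Y : Type*} {q : Y → Prop} : {p : X × Y // q p.2} ≃ X × {y // q y} where
  toFun p := (p.1.1, ⟨p.1.2, p.2⟩)
  invFun x := ⟨(x.1, x.2.1), x.2.2⟩
  left_inv p := rfl
  right_inv x := rfl

lemma keycount (ha : a ≤ N) (T : Set ℕ) (hT : ∀ i ∈ T, a < i ∧ i < N) :
    Nat.card {σ : Equiv.Perm (Fin N) // desSet σ \ {a} = T ∧ ∀ i ∈ desSet σ, a ≤ i}
      = N.choose a * Nat.card {τ : Equiv.Perm (Fin (N - a)) // desSet τ = {j | j + a ∈ T}} := by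
  have e1 : {σ : Equiv.Perm (Fin N) // desSet σ \ {a} = T ∧ ∀ i ∈ desSet σ, a ≤ i}
      ≃ {x : {σ : Equiv.Perm (Fin N) // ∀ i ∈ desSet σ, a ≤ i} // desSet x.1 \ {a} = T} :=
    (Equiv.subtypeEquivRight (fun σ => and_comm)).trans
      (Equiv.subtypeSubtypeEquivSubtypeInter (fun σ : Equiv.Perm (Fin N) => ∀ i ∈ desSet σ, a ≤ i)
        (fun σ => desSet σ \ {a} = T)).symm
  have e2 : {x : {σ : Equiv.Perm (Fin N) // ∀ i ∈ desSet σ, a ≤ i} // desSet x.1 \ {a} = T}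
      ≃ {p : {S : Finset (Fin N) // S.card = a} × Equiv.Perm (Fin (N - a)) //
          desSet p.2 = {j | j + a ∈ T}} :=
    (Equiv.subtypeEquiv (phiEquiv ha).symm (by
      intro x
      rw [← desB ha ((phiEquiv ha).symm x).1.1 ((phiEquiv ha).symm x).1.2 ((phiEquiv ha).symm x).2 T hT]
      rw [← phiEquiv_apply ha, Equiv.apply_symm_apply]))
  rw [Nat.card_congr (e1.trans e2), Nat.card_congr
    (prodSubtypeSnd (X := {S : Finset (Fin N) // S.card = a})
      (Y := Equiv.Perm (Fin (N - a))) (q := fun τ => desSet τ = {j | j + a ∈ T})),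
    Nat.card_prod]
  congr 1
  rw [Nat.card_eq_fintype_card, Fintype.card_finset_len, Fintype.card_fin]

end Stmt5
namespace Stmt5

lemma rmul_lt {r x y : ℕ} (h0 : 0 < r) : r * x < r * y ↔ x < y := by
  constructor
  · intro h; by_contra hc; push_neg at hc
    exact absurd (Nat.mul_le_mul_left r hc) (not_le.mpr h)
  · intro h; exact mul_lt_mul_of_pos_left h h0

lemma card_subtype_or_disjoint {α : Type*} [Finite α] (p q : α → Prop)
    (h : ∀ x, p x → q x → False) :
    Nat.card {x // p x ∨ q x} = Nat.card {x // p x} + Nat.card {x // q x} := by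
  classical
  rw [Nat.card_congr (subtypeOrEquiv p q (Pi.disjoint_iff.mpr fun x =>
    Prop.disjoint_iff.mpr (fun hpq => h x hpq.1 hpq.2))), Nat.card_sum]

lemma strictMono_of_no_descent {M : ℕ} (σ : Equiv.Perm (Fin M))
    (h : desSet σ = (∅ : Set ℕ)) : StrictMono ⇑σ := by
  cases M with
  | zero => exact fun x => x.elim0
  | succ b =>
    rw [Fin.strictMono_iff_lt_succ]
    intro k
    have hkN : (k : ℕ) + 1 < b + 1 := by have := k.isLt; omega
    have hnd : ¬ ((k : ℕ) + 1 ∈ desSet σ) := by rw [h]; exact fun hd => hd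
    rw [mem_desSet hkN] at hnd
    push_neg at hnd
    have hle := hnd (Nat.succ_pos _)
    simp only [Nat.add_sub_cancel] at hle
    have hne : σ ⟨(k : ℕ), by omega⟩ ≠ σ ⟨(k : ℕ) + 1, hkN⟩ := fun hc => by
      have := congrArg Fin.val (σ.injective hc); simp at this
    have hlt := lt_of_le_of_ne hle hne
    convert hlt using 2
    all_goals exact Fin.ext (by simp)

lemma desSet_one (M : ℕ) : desSet (1 : Equiv.Perm (Fin M)) = (∅ : Set ℕ) := by
  ext i
  simp only [Set.mem_empty_iff_false, iff_false]
  rintro ⟨h, h0, hlt⟩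
  simp only [Equiv.Perm.one_apply] at hlt
  rw [Fin.lt_def] at hlt
  simp at hlt
  omega

lemma card_des_empty (M : ℕ) :
    Nat.card {σ : Equiv.Perm (Fin M) // desSet σ = (∅ : Set ℕ)} = 1 := by
  rw [Nat.card_eq_one_iff_unique]
  constructor
  · constructor
    rintro ⟨σ, hσ⟩ ⟨τ, hτ⟩
    have h1 : ⇑σ = ⇑(Finset.univ.orderEmbOfFin (by simp : (Finset.univ : Finset (Fin M)).card = M)) :=
      Finset.orderEmbOfFin_unique _ (fun x => Finset.mem_univ _) (strictMono_of_no_descent σ hσ)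
    have h2 : ⇑τ = ⇑(Finset.univ.orderEmbOfFin (by simp : (Finset.univ : Finset (Fin M)).card = M)) :=
      Finset.orderEmbOfFin_unique _ (fun x => Finset.mem_univ _) (strictMono_of_no_descent τ hτ)
    exact Subtype.ext (Equiv.coe_fn_injective (h1.trans h2.symm))
  · exact ⟨⟨1, desSet_one M⟩⟩

/-- The main combinatorial recurrence for generalized Euler numbers. -/
lemma comb_identity (r m : ℕ) (hr : 2 ≤ r) (hm : 1 ≤ m) :
    ∑ k ∈ Finset.range m, (-1 : ℚ) ^ k * ((r * m - 1).choose (r * k))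
        * genEuler r (r * (m - k) - 1) = (-1) ^ (m - 1) := by
  have hr0 : 0 < r := by omega
  set N := r * m - 1 with hN
  have hNm : r * m = N + 1 := by
    have : 1 ≤ r * m := by
      calc 1 ≤ m := hm
      _ = 1 * m := (one_mul m).symm
      _ ≤ r * m := Nat.mul_le_mul_right m (by omega)
    omega
  -- the exact-count quantities
  set E : ℕ → ℕ := fun j => Nat.card {σ : Equiv.Perm (Fin N) //
    desSet σ = {i | r * j < i ∧ i < N ∧ r ∣ i}} with hE
  -- r*k < N for k < m
  have hkN : ∀ k, k < m → r * k < N := by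
    intro k hk
    have h1 : r * (k + 1) ≤ r * m := Nat.mul_le_mul_left r (by omega)
    have h2 : r * (k + 1) = r * k + r := by ring
    omega
  -- Step A: identify each summand with F k
  have hstepA : ∀ k, k < m →
      ((r * m - 1).choose (r * k) * genEuler r (r * (m - k) - 1) : ℚ)
        = (Nat.card {σ : Equiv.Perm (Fin N) //
            desSet σ \ {r * k} = {i | r * k < i ∧ i < N ∧ r ∣ i}
            ∧ ∀ i ∈ desSet σ, r * k ≤ i} : ℚ) := by
    intro k hk
    have ha : r * k ≤ N := le_of_lt (hkN k hk)
    have hkey := keycount (N := N) (a := r * k)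
      ha {i | r * k < i ∧ i < N ∧ r ∣ i} (fun i hi => ⟨hi.1, hi.2.1⟩)
    rw [hkey]
    have hshift : {j | j + r * k ∈ {i | r * k < i ∧ i < N ∧ r ∣ i}}
        = {i | 0 < i ∧ i < N - r * k ∧ r ∣ i} := by
      ext j
      simp only [Set.mem_setOf_eq]
      constructor
      · rintro ⟨h1, h2, h3⟩
        rcases h3 with ⟨c, hc⟩
        have hck : k ≤ c := by
          by_contra hcon; push_neg at hcon
          have : r * c < r * k := mul_lt_mul_of_pos_left hcon hr0
          omega
        refine ⟨by omega, by omega, ⟨c - k, ?_⟩⟩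
        have hmm : r * (c - k) + r * k = r * c := by
          rw [← Nat.mul_add, Nat.sub_add_cancel hck]
        omega
      · rintro ⟨h1, h2, h3⟩
        exact ⟨by omega, by omega, Dvd.dvd.add h3 (dvd_mul_right r k)⟩
    rw [hshift]
    have hNk : N - r * k = r * (m - k) - 1 := by
      have h1 : r * (m - k) + r * k = r * m := by
        rw [← Nat.mul_add, Nat.sub_add_cancel (le_of_lt hk)]
      omega
    rw [hNk, genEuler]
    push_cast
    ring
  -- membership in the target sets, via the multiple-of-r witness
  have hTmem : ∀ j i, i ∈ ({i | r * j < i ∧ i < N ∧ r ∣ i} : Set ℕ)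
      ↔ ∃ c, i = r * c ∧ j < c ∧ i < N := by
    intro j i
    constructor
    · rintro ⟨h1, h2, c, rfl⟩
      exact ⟨c, rfl, (rmul_lt hr0).mp h1, h2⟩
    · rintro ⟨c, rfl, hc, h2⟩
      exact ⟨(rmul_lt hr0).mpr hc, h2, dvd_mul_right r c⟩
  -- Step B : decompose each F into exact-descent counts
  have hstepB : ∀ k, 0 < k → k < m →
      (Nat.card {σ : Equiv.Perm (Fin N) //
          desSet σ \ {r * k} = {i | r * k < i ∧ i < N ∧ r ∣ i}
          ∧ ∀ i ∈ desSet σ, r * k ≤ i} : ℚ) = E k + E (k - 1) := by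
    intro k hk0 hk
    have hunion : ({i | r * (k - 1) < i ∧ i < N ∧ r ∣ i} : Set ℕ)
        = {i | r * k < i ∧ i < N ∧ r ∣ i} ∪ {r * k} := by
      ext i
      rw [Set.mem_union, Set.mem_singleton_iff, hTmem, hTmem]
      constructor
      · rintro ⟨c, rfl, hc, hcN⟩
        rcases eq_or_lt_of_le (show k ≤ c by omega) with h | h
        · right; rw [h]
        · left; exact ⟨c, rfl, h, hcN⟩
      · rintro (⟨c, rfl, hc, hcN⟩ | rfl)
        · exact ⟨c, rfl, by omega, hcN⟩
        · exact ⟨k, rfl, by omega, hkN k hk⟩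
    have hrkTk : r * k ∉ ({i | r * k < i ∧ i < N ∧ r ∣ i} : Set ℕ) :=
      fun h => lt_irrefl _ h.1
    have hcond : ∀ σ : Equiv.Perm (Fin N),
        (desSet σ \ {r * k} = {i | r * k < i ∧ i < N ∧ r ∣ i}
          ∧ ∀ i ∈ desSet σ, r * k ≤ i)
        ↔ (desSet σ = {i | r * k < i ∧ i < N ∧ r ∣ i}
          ∨ desSet σ = {i | r * (k - 1) < i ∧ i < N ∧ r ∣ i}) := by
      intro σ
      constructor
      · rintro ⟨hdiff, hge⟩
        by_cases hin : r * k ∈ desSet σ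
        · right; rw [hunion]
          ext i
          constructor
          · intro hi
            by_cases hik : i = r * k
            · right; rw [hik]; rfl
            · left; rw [← hdiff]; exact ⟨hi, hik⟩
          · rintro (hi | hi)
            · rw [← hdiff] at hi; exact hi.1
            · rw [hi]; exact hin
        · left; rw [← hdiff, Set.diff_singleton_eq_self hin]
      · rintro (h | h)
        · refine ⟨by rw [h, Set.diff_singleton_eq_self hrkTk], ?_⟩
          intro i hi; rw [h] at hi; exact le_of_lt hi.1
        · constructor
          · rw [h, hunion]
            ext i
            constructor
            · rintro ⟨(hi | hi), hne⟩
              · exact hi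
              · exact absurd hi hne
            · intro hi
              exact ⟨Or.inl hi, fun hc => hrkTk (hc ▸ hi)⟩
          · intro i hi
            rw [h, hTmem] at hi
            obtain ⟨c, rfl, hc, _⟩ := hi
            exact Nat.mul_le_mul_left r (by omega)
    have hdisj : ∀ σ : Equiv.Perm (Fin N),
        desSet σ = {i | r * k < i ∧ i < N ∧ r ∣ i} →
        desSet σ = {i | r * (k - 1) < i ∧ i < N ∧ r ∣ i} → False := by
      intro σ h1 h2
      have : r * k ∈ desSet σ := by
        rw [h2, hunion]; exact Or.inr rfl
      rw [h1] at this
      exact hrkTk this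
    rw [Nat.card_congr (Equiv.subtypeEquivRight hcond),
      card_subtype_or_disjoint _ _ hdisj]
    push_cast
    rfl
  have hstepB0 :
      (Nat.card {σ : Equiv.Perm (Fin N) //
          desSet σ \ {r * 0} = {i | r * 0 < i ∧ i < N ∧ r ∣ i}
          ∧ ∀ i ∈ desSet σ, r * 0 ≤ i} : ℚ) = E 0 := by
    have hcond : ∀ σ : Equiv.Perm (Fin N),
        (desSet σ \ {r * 0} = {i | r * 0 < i ∧ i < N ∧ r ∣ i}
          ∧ ∀ i ∈ desSet σ, r * 0 ≤ i)
        ↔ desSet σ = {i | r * 0 < i ∧ i < N ∧ r ∣ i} := by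
      intro σ
      have h0 : (r * 0 : ℕ) ∉ desSet σ := by
        intro h; have := (desSet_bounds h).1; simp at this
      constructor
      · rintro ⟨hdiff, -⟩
        rw [← hdiff, Set.diff_singleton_eq_self h0]
      · intro h
        refine ⟨?_, fun i _ => by omega⟩
        rw [h]
        apply Set.diff_singleton_eq_self
        intro hc
        exact lt_irrefl _ hc.1
    rw [Nat.card_congr (Equiv.subtypeEquivRight hcond)]
  -- Step C : the last exact count is 1
  have hstepC : E (m - 1) = 1 := by
    have hempty : ({i | r * (m - 1) < i ∧ i < N ∧ r ∣ i} : Set ℕ) = (∅ : Set ℕ) := by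
      ext i
      simp only [Set.mem_empty_iff_false, iff_false]
      rw [hTmem]
      rintro ⟨c, rfl, hc, hcN⟩
      have : r * m ≤ r * c := Nat.mul_le_mul_left r (by omega)
      omega
    show Nat.card _ = 1
    rw [hempty]
    exact card_des_empty N
  -- assemble: rewrite the summand
  have hsummand : ∀ k ∈ Finset.range m,
      (-1 : ℚ) ^ k * ((r * m - 1).choose (r * k)) * genEuler r (r * (m - k) - 1)
        = (-1 : ℚ) ^ k * (if k = 0 then (E 0 : ℚ) else (E k : ℚ) + E (k - 1)) := by
    intro k hk
    rw [Finset.mem_range] at hk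
    rw [mul_assoc, hstepA k hk]
    by_cases hk0 : k = 0
    · subst hk0; simp only [if_pos rfl]
      rw [hstepB0]
      simp
    · rw [if_neg hk0, hstepB k (by omega) hk]
  rw [Finset.sum_congr rfl hsummand]
  -- Step D : telescope
  obtain ⟨M, rfl⟩ : ∃ M, m = M + 1 := ⟨m - 1, by omega⟩
  rw [Finset.sum_range_succ']
  have hterm : ∀ i, (-1 : ℚ) ^ (i + 1) *
      (if i + 1 = 0 then (E 0 : ℚ) else (E (i + 1) : ℚ) + E (i + 1 - 1))
      = (fun j => (-1 : ℚ) ^ j * E j) (i + 1) - (fun j => (-1 : ℚ) ^ j * E j) i := by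
    intro i
    simp only [Nat.add_sub_cancel, if_neg (Nat.succ_ne_zero i)]
    rw [pow_succ]
    ring
  rw [Finset.sum_congr rfl (fun i _ => hterm i), Finset.sum_range_sub
    (fun j => (-1 : ℚ) ^ j * E j) M]
  simp only [Nat.add_sub_cancel] at hstepC
  simp only [if_true, pow_zero, one_mul, Nat.add_sub_cancel]
  rw [hstepC]
  push_cast
  ring

end Stmt5
namespace Stmt5

lemma sum_multiples {M : Type*} [AddCommMonoid M] (r n : ℕ) (hr0 : 0 < r) (f : ℕ → M)
    (hf : ∀ j, ¬ r ∣ j → f j = 0) :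
    ∑ j ∈ Finset.range (r * n), f j = ∑ s ∈ Finset.range n, f (r * s) := by
  classical
  rw [← Finset.sum_filter_of_ne (p := fun j => r ∣ j)
    (fun x _ hne => by_contra fun hc => hne (hf x hc))]
  have himg : (Finset.range (r * n)).filter (fun j => r ∣ j)
      = (Finset.range n).image (fun s => r * s) := by
    ext j
    simp only [Finset.mem_filter, Finset.mem_range, Finset.mem_image]
    constructor
    · rintro ⟨hj, c, rfl⟩
      exact ⟨c, (rmul_lt hr0).mp hj, rfl⟩
    · rintro ⟨c, hc, rfl⟩
      exact ⟨(rmul_lt hr0).mpr hc, c, rfl⟩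
  rw [himg, Finset.sum_image (fun a _ b _ hab => Nat.eq_of_mul_eq_mul_left hr0 hab)]

lemma coeff_derivativeFun' (f : PowerSeries ℚ) (n : ℕ) :
    PowerSeries.coeff n f.derivativeFun = PowerSeries.coeff (n + 1) f * (n + 1) :=
  PowerSeries.coeff_derivative f n

lemma series_identity (r : ℕ) (hr : 2 ≤ r) (rseq : ℕ → ℚ) (L g : PowerSeries ℚ)
    (hL : L = PowerSeries.mk fun k =>
      if r ∣ k ∧ k ≠ 0 then rseq (k / r) / (Nat.factorial k : ℚ) else 0)
    (hg : g = PowerSeries.mk fun k =>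
      if r ∣ k then (-1 : ℚ) ^ (k / r) / (Nat.factorial k : ℚ) else 0)
    (hlog : g * L.derivativeFun = -g.derivativeFun) (m : ℕ) (hm : 1 ≤ m) :
    ∑ k ∈ Finset.range m, (-1 : ℚ) ^ k * ((r * m - 1).choose (r * k)) * rseq (m - k)
      = (-1) ^ (m - 1) := by
  have hr0 : 0 < r := by omega
  set d := r * m - 1 with hd
  have hdm : r * m = d + 1 := by
    have h1 : 1 * 1 ≤ r * m := Nat.mul_le_mul (by omega) hm
    omega
  have h := congrArg (PowerSeries.coeff d) hlog
  rw [PowerSeries.coeff_mul, map_neg, coeff_derivativeFun',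
    Finset.Nat.sum_antidiagonal_eq_sum_range_succ_mk] at h
  rw [show d.succ = r * m from hdm.symm] at h
  rw [sum_multiples r m hr0
    (fun j => (PowerSeries.coeff j) g * (PowerSeries.coeff (d - j)) L.derivativeFun)
    (fun j hj => by
      simp only [hg, PowerSeries.coeff_mk, if_neg hj, zero_mul])] at h
  -- simplify each term of the sum
  have hterm : ∀ s ∈ Finset.range m,
      (PowerSeries.coeff (r * s)) g * (PowerSeries.coeff (d - r * s)) L.derivativeFun
        = (-1 : ℚ) ^ s / (Nat.factorial (r * s) : ℚ)
          * (rseq (m - s) / (Nat.factorial (r * (m - s)) : ℚ) * ((r * (m - s) : ℕ) : ℚ)) := by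
    intro s hs
    rw [Finset.mem_range] at hs
    have hABm : r * s + r * (m - s) = r * m := by
      rw [← Nat.mul_add]
      congr 1
      omega
    have hB0 : 0 < r * (m - s) := by
      have : 1 * 1 ≤ r * (m - s) := Nat.mul_le_mul (by omega) (by omega)
      omega
    have hBd : d - r * s + 1 = r * (m - s) := by omega
    rw [coeff_derivativeFun']
    rw [hg, hL, PowerSeries.coeff_mk, PowerSeries.coeff_mk]
    rw [if_pos (dvd_mul_right r s), if_pos ⟨by rw [hBd]; exact dvd_mul_right r (m - s), by omega⟩]
    rw [Nat.mul_div_cancel_left s hr0, hBd]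
    rw [Nat.mul_div_cancel_left (m - s) hr0]
    have hcast : ((d - r * s : ℕ) : ℚ) + 1 = ((r * (m - s) : ℕ) : ℚ) := by
      rw [← hBd]; push_cast; ring
    rw [hcast]
  rw [Finset.sum_congr rfl hterm] at h
  -- compute the right-hand side coefficient
  rw [show d + 1 = r * m from hdm.symm, hg, PowerSeries.coeff_mk,
    if_pos (dvd_mul_right r m), Nat.mul_div_cancel_left m hr0] at h
  -- now multiply through by d!
  have hfacne : ∀ j : ℕ, ((Nat.factorial j : ℕ) : ℚ) ≠ 0 :=
    fun j => Nat.cast_ne_zero.mpr (Nat.factorial_ne_zero j)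
  calc ∑ k ∈ Finset.range m, (-1 : ℚ) ^ k * ((r * m - 1).choose (r * k)) * rseq (m - k)
      = ∑ s ∈ Finset.range m, ((-1 : ℚ) ^ s / (Nat.factorial (r * s) : ℚ)
          * (rseq (m - s) / (Nat.factorial (r * (m - s)) : ℚ) * ((r * (m - s) : ℕ) : ℚ)))
          * ((Nat.factorial d : ℕ) : ℚ) := by
        refine Finset.sum_congr rfl (fun s hs => ?_)
        rw [Finset.mem_range] at hs
        have hABm : r * s + r * (m - s) = r * m := by
          rw [← Nat.mul_add]; congr 1; omega
        have hB0 : 0 < r * (m - s) := by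
          have : 1 * 1 ≤ r * (m - s) := Nat.mul_le_mul (by omega) (by omega)
          omega
        have hAd : r * s ≤ d := by omega
        have hdA : d - r * s = r * (m - s) - 1 := by omega
        rw [← hd, Nat.cast_choose ℚ hAd, hdA]
        have hBf : ((Nat.factorial (r * (m - s)) : ℕ) : ℚ)
            = ((r * (m - s) : ℕ) : ℚ) * ((Nat.factorial (r * (m - s) - 1) : ℕ) : ℚ) := by
          rw_mod_cast [Nat.mul_factorial_pred hB0.ne']
        rw [hBf]
        have nzB : ((r * (m - s) : ℕ) : ℚ) ≠ 0 := Nat.cast_ne_zero.mpr (by omega)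
        have nzr : ((r : ℕ) : ℚ) ≠ 0 := Nat.cast_ne_zero.mpr (by omega)
        have nzms : ((m - s : ℕ) : ℚ) ≠ 0 := Nat.cast_ne_zero.mpr (by omega)
        field_simp
    _ = (-((-1 : ℚ) ^ m / ((Nat.factorial (r * m) : ℕ) : ℚ) * (((d : ℕ) : ℚ) + 1)))
          * ((Nat.factorial d : ℕ) : ℚ) := by
        rw [← Finset.sum_mul, h]
    _ = (-1 : ℚ) ^ (m - 1) := by
        have hfact : ((Nat.factorial (r * m) : ℕ) : ℚ)
            = (((d : ℕ) : ℚ) + 1) * ((Nat.factorial d : ℕ) : ℚ) := by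
          rw [hdm]
          rw [Nat.factorial_succ]
          push_cast
          ring
        rw [hfact]
        have nz : (((d : ℕ) : ℚ) + 1) ≠ 0 := by positivity
        have hmpow : (-1 : ℚ) ^ m = (-1 : ℚ) ^ (m - 1) * (-1) := by
          conv_lhs => rw [show m = (m - 1) + 1 from by omega]
          rw [pow_succ]
        rw [hmpow]
        field_simp

end Stmt5

/-- Fix `r ≥ 2`. If `∑_{n≥1} r_n z^{rn}/(rn)! = -log (∑_{n≥0} (-1)^n z^{rn}/(rn)!)` as
formal power series over `ℚ` (the logarithm characterized by: the left side `L` has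
constant term `0` and `g * L' = -g'`), then `r_n = E_{rn-1}`, the number of
permutations of `[rn-1]` with descent set `{r, 2r, ..., rn-r}`. -/
theorem stmt_5 (r : ℕ) (hr : 2 ≤ r) (rseq : ℕ → ℚ)
    (L g : PowerSeries ℚ)
    (hL : L = PowerSeries.mk fun k =>
      if r ∣ k ∧ k ≠ 0 then rseq (k / r) / (Nat.factorial k : ℚ) else 0)
    (hg : g = PowerSeries.mk fun k =>
      if r ∣ k then (-1 : ℚ) ^ (k / r) / (Nat.factorial k : ℚ) else 0)
    (hlog : g * L.derivativeFun = -g.derivativeFun) :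
    ∀ n : ℕ, 1 ≤ n → rseq n = genEuler r (r * n - 1) := by
  intro n
  induction n using Nat.strong_induction_on with
  | _ n ih =>
    intro hn
    have h1 := Stmt5.series_identity r hr rseq L g hL hg hlog n hn
    have h2 := Stmt5.comb_identity r n hr hn
    obtain ⟨M, rfl⟩ : ∃ M, n = M + 1 := ⟨n - 1, by omega⟩
    rw [Finset.sum_range_succ'] at h1 h2
    have hiheq : ∀ i ∈ Finset.range M,
        (-1 : ℚ) ^ (i + 1) * ((r * (M + 1) - 1).choose (r * (i + 1))) * rseq (M + 1 - (i + 1))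
          = (-1 : ℚ) ^ (i + 1) * ((r * (M + 1) - 1).choose (r * (i + 1)))
              * genEuler r (r * (M + 1 - (i + 1)) - 1) := by
      intro i hi
      rw [Finset.mem_range] at hi
      congr 1
      have : M + 1 - (i + 1) = M - i := by omega
      rw [this]
      exact ih (M - i) (by omega) (by omega)
    rw [Finset.sum_congr rfl hiheq] at h1
    have h3 := h1.trans h2.symm
    have h4 := add_left_cancel h3
    simpa using h4
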